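/- Under the same hypotheses, for every G ∈ Sym(2) the minimum value satisfies: min over D ∈ Sym(2) of ∫_{-1/2}^{1/2} Q(D + tG - b(t)) dt = (1/12) Q(G - 12∫ t b(t) dt) + ∫ Q(b(t)) dt − Q(∫ b(t) dt) − 12 Q(∫ t b(t) dt), where all integrals are over (-1/2, 1/2). -/

import Mathlib

open MeasureTheory Matrix

section Helpers

open QuadraticMap

lemma int_bdd {f : ℝ → ℝ} (hf : Measurable f) {C : ℝ}
    (h : ∀ t ∈ Set.Ioo (-(1:ℝ)/2) (1/2), |f t| ≤ C) :
    IntegrableOn f (Set.Ioo (-(1:ℝ)/2) (1/2)) := by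
  refine Integrable.mono' (g := fun _ => C) ?_ hf.aestronglyMeasurable ?_
  · refine integrableOn_const ?_
    rw [Real.volume_Ioo]
    exact ENNReal.ofReal_ne_top
  · exact (ae_restrict_mem measurableSet_Ioo).mono fun t ht => by
      simpa [Real.norm_eq_abs] using h t ht

lemma int_const (c : ℝ) : ∫ _ in Set.Ioo (-(1:ℝ)/2) (1/2), c = c := by
  rw [setIntegral_const, Real.volume_real_Ioo]
  norm_num

lemma int_t : ∫ t in Set.Ioo (-(1:ℝ)/2) (1/2), t = 0 := by
  rw [← integral_Ioc_eq_integral_Ioo,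
    ← intervalIntegral.integral_of_le (by norm_num : (-(1:ℝ)/2) ≤ 1/2)]
  rw [integral_id]; norm_num

lemma int_t2 : ∫ t in Set.Ioo (-(1:ℝ)/2) (1/2), t ^ 2 = 1 / 12 := by
  rw [← integral_Ioc_eq_integral_Ioo,
    ← intervalIntegral.integral_of_le (by norm_num : (-(1:ℝ)/2) ≤ 1/2)]
  rw [integral_pow]; norm_num

abbrev MyV := Matrix (Fin 2) (Fin 2) ℝ

noncomputable abbrev MyE (p : Fin 2 × Fin 2) : MyV := single p.1 p.2 (1:ℝ)

lemma mat_decomp (M : MyV) : M = ∑ p : Fin 2 × Fin 2, M p.1 p.2 • MyE p := by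
  rw [Fintype.sum_prod_type]
  conv_lhs => rw [matrix_eq_sum_single M]
  refine Finset.sum_congr rfl fun i _ => Finset.sum_congr rfl fun j _ => ?_
  rw [smul_single, smul_eq_mul, mul_one]

lemma hlin (Q : QuadraticForm ℝ MyV) (X M : MyV) :
    polar ⇑Q X M = ∑ p : Fin 2 × Fin 2, M p.1 p.2 * polar ⇑Q X (MyE p) := by
  rw [← polarBilin_apply_apply]
  conv_lhs => rw [mat_decomp M]
  rw [map_sum]
  simp only [_root_.map_smul, smul_eq_mul, polarBilin_apply_apply]

lemma hadd (Q : QuadraticForm ℝ MyV) (x y : MyV) :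
    Q (x + y) = Q x + Q y + polar ⇑Q x y := by
  simp [QuadraticMap.polar]

lemma hQexp (Q : QuadraticForm ℝ MyV) (M : MyV) :
    Q M = ∑ p : Fin 2 × Fin 2, ∑ q : Fin 2 × Fin 2,
      (M p.1 p.2 * M q.1 q.2) * ((1:ℝ)/2 * polar ⇑Q (MyE p) (MyE q)) := by
  have h2 : polar ⇑Q M M = 2 * Q M := by
    rw [polar_self]; simp [two_smul, two_mul]
  have e1 : polar ⇑Q M M = ∑ p : Fin 2 × Fin 2, ∑ q : Fin 2 × Fin 2,
      (M p.1 p.2 * M q.1 q.2) * polar ⇑Q (MyE p) (MyE q) := by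
    rw [hlin Q M M]
    refine Finset.sum_congr rfl fun p _ => ?_
    rw [polar_comm, hlin Q (MyE p) M, Finset.mul_sum]
    exact Finset.sum_congr rfl fun q _ => by ring
  have e2 : ∑ p : Fin 2 × Fin 2, ∑ q : Fin 2 × Fin 2,
      (M p.1 p.2 * M q.1 q.2) * ((1:ℝ)/2 * polar ⇑Q (MyE p) (MyE q))
      = (1/2) * ∑ p : Fin 2 × Fin 2, ∑ q : Fin 2 × Fin 2,
        (M p.1 p.2 * M q.1 q.2) * polar ⇑Q (MyE p) (MyE q) := by
    rw [Finset.mul_sum]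
    refine Finset.sum_congr rfl fun p _ => ?_
    rw [Finset.mul_sum]
    exact Finset.sum_congr rfl fun q _ => by ring
  rw [e2, ← e1, h2]; ring

end Helpers

open QuadraticMap

/-- explicit formula for the minimum value of
`D ↦ ∫_{-1/2}^{1/2} Q (D + t•G - b t) dt` over symmetric `D`. -/
theorem stmt1
    (Q : QuadraticForm ℝ (Matrix (Fin 2) (Fin 2) ℝ))
    (hpsd : ∀ M, 0 ≤ Q M)
    (hpd : ∀ M : Matrix (Fin 2) (Fin 2) ℝ, Mᵀ = M → M ≠ 0 → 0 < Q M)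
    (hskew : ∀ M : Matrix (Fin 2) (Fin 2) ℝ, Mᵀ = -M → Q M = 0)
    (b : ℝ → Matrix (Fin 2) (Fin 2) ℝ)
    (hbsym : ∀ t, (b t)ᵀ = b t)
    (hbmeas : ∀ i j, Measurable fun t => b t i j)
    (hbbdd : ∃ C, ∀ t i j, |b t i j| ≤ C)
    (M0 M1 : Matrix (Fin 2) (Fin 2) ℝ)
    (hM0 : ∀ i j, M0 i j = ∫ t in Set.Ioo (-(1:ℝ)/2) (1/2), b t i j)
    (hM1 : ∀ i j, M1 i j = ∫ t in Set.Ioo (-(1:ℝ)/2) (1/2), t * b t i j) :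
    ∀ G : Matrix (Fin 2) (Fin 2) ℝ, Gᵀ = G →
      IsLeast
        {v : ℝ | ∃ D : Matrix (Fin 2) (Fin 2) ℝ, Dᵀ = D ∧
            v = ∫ t in Set.Ioo (-(1:ℝ)/2) (1/2), Q (D + t • G - b t)}
        ((1/12) * Q (G - (12:ℝ) • M1)
          + (∫ t in Set.Ioo (-(1:ℝ)/2) (1/2), Q (b t))
          - Q M0 - 12 * Q M1) := by
  intro G hG
  obtain ⟨C, hC⟩ := hbbdd
  have hC0 : (0:ℝ) ≤ C := le_trans (abs_nonneg _) (hC 0 0 0)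
  -- basic integrabilities
  have hintE : ∀ i j : Fin 2, IntegrableOn (fun t => b t i j)
      (Set.Ioo (-(1:ℝ)/2) (1/2)) :=
    fun i j => int_bdd (hbmeas i j) (fun t _ => hC t i j)
  have hintTE : ∀ i j : Fin 2, IntegrableOn (fun t => t * b t i j)
      (Set.Ioo (-(1:ℝ)/2) (1/2)) := by
    intro i j
    refine int_bdd (measurable_id.mul (hbmeas i j)) (C := C) fun t ht => ?_
    rw [abs_mul]
    calc |t| * |b t i j| ≤ 1 * C := by
          refine mul_le_mul ?_ (hC t i j) (abs_nonneg _) zero_le_one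
          rw [abs_le]; exact ⟨by linarith [ht.1], by linarith [ht.2]⟩
      _ = C := one_mul C
  have hIntPol : ∀ X : MyV, IntegrableOn (fun t => polar ⇑Q X (b t))
      (Set.Ioo (-(1:ℝ)/2) (1/2)) := by
    intro X
    rw [show (fun t => polar ⇑Q X (b t))
        = fun t => ∑ p : Fin 2 × Fin 2, b t p.1 p.2 * polar ⇑Q X (MyE p)
      from funext fun t => hlin Q X (b t)]
    exact integrable_finset_sum _ fun p _ => (hintE p.1 p.2).mul_const _
  have hIntPolT : ∀ X : MyV, IntegrableOn (fun t => t * polar ⇑Q X (b t))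
      (Set.Ioo (-(1:ℝ)/2) (1/2)) := by
    intro X
    rw [show (fun t => t * polar ⇑Q X (b t))
        = fun t => ∑ p : Fin 2 × Fin 2, (t * b t p.1 p.2) * polar ⇑Q X (MyE p)
      from funext fun t => by
        rw [hlin Q X (b t), Finset.mul_sum]
        exact Finset.sum_congr rfl fun q _ => by ring]
    exact integrable_finset_sum _ fun p _ => (hintTE p.1 p.2).mul_const _
  have hIntQb : IntegrableOn (fun t => Q (b t)) (Set.Ioo (-(1:ℝ)/2) (1/2)) := by
    rw [show (fun t => Q (b t))
        = fun t => ∑ p : Fin 2 × Fin 2, ∑ q : Fin 2 × Fin 2,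
            (b t p.1 p.2 * b t q.1 q.2) * ((1:ℝ)/2 * polar ⇑Q (MyE p) (MyE q))
      from funext fun t => hQexp Q (b t)]
    refine integrable_finset_sum _ fun p _ => integrable_finset_sum _ fun q _ =>
      Integrable.mul_const ?_ _
    refine int_bdd ((hbmeas p.1 p.2).mul (hbmeas q.1 q.2)) (C := C * C) fun t _ => ?_
    rw [abs_mul]
    exact mul_le_mul (hC t p.1 p.2) (hC t q.1 q.2) (abs_nonneg _) hC0
  -- integral values of the polar terms
  have hIpol : ∀ X : MyV,
      (∫ t in Set.Ioo (-(1:ℝ)/2) (1/2), polar ⇑Q X (b t)) = polar ⇑Q X M0 := by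
    intro X
    rw [show (fun t => polar ⇑Q X (b t))
        = fun t => ∑ p : Fin 2 × Fin 2, b t p.1 p.2 * polar ⇑Q X (MyE p)
      from funext fun t => hlin Q X (b t),
      integral_finset_sum _ fun p _ => (hintE p.1 p.2).mul_const _]
    rw [hlin Q X M0]
    refine Finset.sum_congr rfl fun p _ => ?_
    rw [hM0 p.1 p.2]
    exact integral_mul_const _ _
  have hIpolT : ∀ X : MyV,
      (∫ t in Set.Ioo (-(1:ℝ)/2) (1/2), t * polar ⇑Q X (b t)) = polar ⇑Q X M1 := by
    intro X
    rw [show (fun t => t * polar ⇑Q X (b t))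
        = fun t => ∑ p : Fin 2 × Fin 2, (t * b t p.1 p.2) * polar ⇑Q X (MyE p)
      from funext fun t => by
        rw [hlin Q X (b t), Finset.mul_sum]
        exact Finset.sum_congr rfl fun q _ => by ring,
      integral_finset_sum _ fun p _ => (hintTE p.1 p.2).mul_const _]
    rw [hlin Q X M1]
    refine Finset.sum_congr rfl fun p _ => ?_
    rw [hM1 p.1 p.2]
    exact integral_mul_const _ _
  -- remaining integrabilities
  have iconst : ∀ c : ℝ, IntegrableOn (fun _ : ℝ => c) (Set.Ioo (-(1:ℝ)/2) (1/2)) :=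
    fun c => int_bdd measurable_const (C := |c|) fun t _ => le_rfl
  have it1 : IntegrableOn (fun t : ℝ => t) (Set.Ioo (-(1:ℝ)/2) (1/2)) :=
    int_bdd measurable_id (C := 1) fun t ht => by
      rw [abs_le]; exact ⟨by linarith [ht.1], by linarith [ht.2]⟩
  have it2 : IntegrableOn (fun t : ℝ => t ^ 2) (Set.Ioo (-(1:ℝ)/2) (1/2)) :=
    int_bdd (measurable_id.pow_const 2) (C := 1) fun t ht => by
      rw [abs_of_nonneg (sq_nonneg t)]
      nlinarith [ht.1, ht.2]
  -- the key integral formula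
  have key : ∀ D : MyV, (∫ t in Set.Ioo (-(1:ℝ)/2) (1/2), Q (D + t • G - b t))
      = Q D + (1/12) * Q G + (∫ t in Set.Ioo (-(1:ℝ)/2) (1/2), Q (b t))
        - polar ⇑Q D M0 - polar ⇑Q G M1 := by
    intro D
    have hpt : (fun t : ℝ => Q (D + t • G - b t)) = fun t =>
        (((Q D + t ^ 2 * Q G) + Q (b t)) + t * polar ⇑Q D G)
          - polar ⇑Q D (b t) - t * polar ⇑Q G (b t) := by
      funext t
      simp only [sub_eq_add_neg, hadd Q, QuadraticMap.map_neg, QuadraticMap.map_smul,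
        polar_add_left, polar_neg_right, polar_smul_left, polar_smul_right, smul_eq_mul]
      ring
    rw [hpt]
    have j1 : IntegrableOn (fun t : ℝ => Q D + t ^ 2 * Q G)
        (Set.Ioo (-(1:ℝ)/2) (1/2)) := (iconst (Q D)).add (it2.mul_const _)
    have j2 : IntegrableOn (fun t : ℝ => Q D + t ^ 2 * Q G + Q (b t))
        (Set.Ioo (-(1:ℝ)/2) (1/2)) := j1.add hIntQb
    have j3 : IntegrableOn
        (fun t : ℝ => Q D + t ^ 2 * Q G + Q (b t) + t * polar ⇑Q D G)
        (Set.Ioo (-(1:ℝ)/2) (1/2)) := j2.add (it1.mul_const _)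
    have j4 : IntegrableOn
        (fun t : ℝ => Q D + t ^ 2 * Q G + Q (b t) + t * polar ⇑Q D G
          - polar ⇑Q D (b t)) (Set.Ioo (-(1:ℝ)/2) (1/2)) := j3.sub (hIntPol D)
    rw [integral_sub j4 (hIntPolT G), integral_sub j3 (hIntPol D),
      integral_add j2 (it1.mul_const _), integral_add j1 hIntQb,
      integral_add (iconst (Q D)) (it2.mul_const _)]
    rw [int_const (Q D), hIpol D, hIpolT G, integral_mul_const, integral_mul_const,
      int_t, int_t2]
    ring
  -- algebraic identities
  have hps : polar ⇑Q M0 M0 = 2 * Q M0 := by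
    rw [polar_self]; simp [two_smul, two_mul]
  have hQG12 : Q (G - (12:ℝ) • M1) = Q G + 144 * Q M1 - 12 * polar ⇑Q G M1 := by
    rw [sub_eq_add_neg, hadd Q, QuadraticMap.map_neg, QuadraticMap.map_smul,
      polar_neg_right, polar_smul_right, smul_eq_mul, smul_eq_mul]
    ring
  constructor
  · refine ⟨M0, ?_, ?_⟩
    · ext i j
      rw [transpose_apply, hM0 j i, hM0 i j]
      have hb : ∀ t, b t j i = b t i j := fun t => by
        conv_lhs => rw [← hbsym t, transpose_apply]
      simp only [hb]
    · rw [key M0, hps, hQG12]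
      ring
  · rintro v ⟨D, hD, rfl⟩
    have h0 : 0 ≤ Q (D - M0) := hpsd _
    have hexp : Q (D - M0) = Q D + Q M0 - polar ⇑Q D M0 := by
      rw [sub_eq_add_neg, hadd Q, QuadraticMap.map_neg, polar_neg_right]
      ring
    rw [hexp] at h0
    rw [key D, hQG12]
    linarith
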